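/- arXiv:math/0210400 — 2 statements merged into one kernel-verified Lean document; each statement's English description precedes it below -/
import Mathlib

section
/- Let R be a discrete valuation ring with fraction field K, let A be a finite étale R-algebra, and let L be a field which is a quotient of the K-algebra A ⊗_R K. Then L is a finite separable extension of K which is unramified over R: the integral closure of R in L is a finite étale R-algebra. -/
open TensorProduct

open IsLocalRing in
lemma aux_isIntegrallyClosed (R : Type) [CommRing R] [IsDomain R] [IsDiscreteValuationRing R]
    (B : Type) [CommRing B] [IsDomain B] [Algebra R B] [Module.Finite R B]
    [Algebra.FormallyUnramified R B] : IsIntegrallyClosed B := by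
  haveI : Algebra.IsIntegral R B := Algebra.IsIntegral.of_finite R B
  haveI : IsNoetherianRing B := Algebra.FiniteType.isNoetherianRing R B
  apply IsIntegrallyClosed.of_localization_maximal
  intro m hm0 hmmax
  obtain ⟨π, hπ⟩ := (IsPrincipalIdealRing.principal (maximalIdeal R)).principal
  set pB := algebraMap R B π with hpBdef
  have hcomap : (m.comap (algebraMap R B)).IsMaximal :=
    Ideal.isMaximal_comap_of_isIntegral_of_isMaximal m
  have hπm : pB ∈ m := by
    have h1 : m.comap (algebraMap R B) = maximalIdeal R := IsLocalRing.eq_maximalIdeal hcomap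
    have h2 : π ∈ m.comap (algebraMap R B) := by
      rw [h1, hπ]; exact Ideal.subset_span rfl
    exact h2
  set I : Ideal B := Ideal.span {pB} with hI
  have hIm : I ≤ m := by rw [hI, Ideal.span_le, Set.singleton_subset_iff]; exact hπm
  set k := R ⧸ maximalIdeal R with hk
  letI : Field k := Ideal.Quotient.field (maximalIdeal R)
  set Bq := B ⧸ I with hBq
  letI : Algebra k Bq := Ideal.Quotient.algebraQuotientOfLEComap (by
    rw [hπ, Submodule.span_le, Set.singleton_subset_iff]
    exact Ideal.mem_comap.mpr (Ideal.subset_span rfl))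
  haveI : IsScalarTower R k Bq := IsScalarTower.of_algebraMap_eq fun r => rfl
  haveI : Algebra.FormallyUnramified R Bq := Algebra.FormallyUnramified.quotient I
  haveI : Algebra.FormallyUnramified k Bq := Algebra.FormallyUnramified.of_restrictScalars (R := R) (A := k) (B := Bq)
  haveI : Module.Finite R Bq :=
    Module.Finite.of_surjective (Ideal.Quotient.mkₐ R I).toLinearMap
      Ideal.Quotient.mk_surjective
  haveI : Module.Finite k Bq := Module.Finite.of_restrictScalars_finite R k Bq
  haveI : IsReduced Bq := Algebra.FormallyUnramified.isReduced_of_field k Bq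
  haveI : IsArtinianRing Bq := isArtinian_of_tower k inferInstance
  have key : ∀ x ∈ m, ∃ t, t ∉ m ∧ t * x ∈ I := by
    intro x hx
    set mq : Ideal Bq := m.map (Ideal.Quotient.mk I) with hmq
    haveI : mq.IsPrime := Ideal.map_isPrime_of_surjective Ideal.Quotient.mk_surjective
      (by rw [Ideal.mk_ker]; exact hIm)
    set Cq := Localization.AtPrime mq with hCq
    have hxq : algebraMap Bq Cq (Ideal.Quotient.mk I x) ∈ maximalIdeal Cq := by
      rw [← Localization.AtPrime.map_eq_maximalIdeal]
      exact Ideal.mem_map_of_mem _ (Ideal.mem_map_of_mem _ hx)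
    obtain ⟨n, hn⟩ := IsArtinianRing.isNilpotent_jacobson_bot (R := Cq)
    rw [IsLocalRing.jacobson_eq_maximalIdeal ⊥ bot_ne_top] at hn
    have h0 : algebraMap Bq Cq (Ideal.Quotient.mk I x) = 0 := by
      have hpow := Ideal.pow_mem_pow hxq n
      rw [hn] at hpow
      exact IsNilpotent.eq_zero ⟨n, hpow⟩
    obtain ⟨⟨s, hs⟩, hs0⟩ := (IsLocalization.map_eq_zero_iff mq.primeCompl Cq _).mp h0
    obtain ⟨t, rfl⟩ := Ideal.Quotient.mk_surjective s
    refine ⟨t, fun ht => hs (Ideal.mem_map_of_mem _ ht), ?_⟩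
    rw [← Ideal.Quotient.eq_zero_iff_mem, map_mul]
    exact hs0
  set C := Localization.AtPrime m with hC
  haveI : IsDomain C := IsLocalization.isDomain_localization
    m.primeCompl_le_nonZeroDivisors
  haveI : IsNoetherianRing C := IsLocalization.isNoetherianRing m.primeCompl C inferInstance
  have hmax : maximalIdeal C = Ideal.span {algebraMap B C pB} := by
    rw [← Localization.AtPrime.map_eq_maximalIdeal]
    apply le_antisymm
    · rw [Ideal.map_le_iff_le_comap]
      intro x hx
      obtain ⟨t, htm, htx⟩ := key x hx
      rw [Ideal.mem_comap, Ideal.mem_span_singleton]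
      rw [hI, Ideal.mem_span_singleton] at htx
      obtain ⟨b, hb⟩ := htx
      have hu : IsUnit (algebraMap B C t) :=
        IsLocalization.map_units C (⟨t, htm⟩ : m.primeCompl)
      have hdvd : algebraMap B C pB ∣ algebraMap B C t * algebraMap B C x :=
        ⟨algebraMap B C b, by rw [← map_mul, hb, map_mul]⟩
      exact hu.dvd_mul_left.mp hdvd
    · rw [Ideal.span_le, Set.singleton_subset_iff]
      exact Ideal.mem_map_of_mem _ hπm
  have hprin : (maximalIdeal C).IsPrincipal := ⟨⟨_, hmax⟩⟩
  haveI : IsDedekindDomain C :=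
    ((tfae_of_isNoetherianRing_of_isLocalRing_of_isDomain C).out 4 2).mp hprin
  infer_instance

/-- If `R` is a DVR with fraction field `K`, `A` a finite étale `R`-algebra, and `L` a field
quotient of `A ⊗_R K`, then `L/K` is finite separable and unramified over `R`: the integral
closure of `R` in `L` is a finite étale `R`-algebra. -/
theorem residue_field_of_finite_etale_unramified
    (R : Type) [CommRing R] [IsDomain R] [IsDiscreteValuationRing R]
    (A : Type) [CommRing A] [Algebra R A] [Module.Finite R A] [Module.Flat R A]
    [Algebra.FormallyUnramified R A]
    (L : Type) [Field L] [Algebra R L] [Algebra (FractionRing R) L]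
    [IsScalarTower R (FractionRing R) L]
    (φ : (FractionRing R) ⊗[R] A →ₐ[FractionRing R] L)
    (hφ : Function.Surjective φ) :
    FiniteDimensional (FractionRing R) L ∧ Algebra.IsSeparable (FractionRing R) L ∧
    Module.Finite R ↥(integralClosure R L) ∧ Module.Flat R ↥(integralClosure R L) ∧
    Algebra.FormallyUnramified R ↥(integralClosure R L) := by
  set K := FractionRing R with hK
  haveI hfin : FiniteDimensional K L := Module.Finite.of_surjective φ.toLinearMap hφ
  haveI : Algebra.FormallyUnramified K L := Algebra.FormallyUnramified.of_surjective φ hφ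
  have hsep : Algebra.IsSeparable K L := Algebra.FormallyUnramified.isSeparable K L
  set f : A →ₐ[R] L := (φ.restrictScalars R).comp (Algebra.TensorProduct.includeRight) with hf
  set B : Subalgebra R L := f.range with hB
  haveI : Module.Finite R B :=
    Module.Finite.of_surjective f.rangeRestrict.toLinearMap f.rangeRestrict_surjective
  haveI : Algebra.FormallyUnramified R B :=
    Algebra.FormallyUnramified.of_surjective f.rangeRestrict f.rangeRestrict_surjective
  have hRL : Function.Injective (algebraMap R L) := by
    rw [IsScalarTower.algebraMap_eq R K L]
    exact (algebraMap K L).injective.comp (IsFractionRing.injective R K)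
  haveI : NoZeroSMulDivisors R B := by
    refine ⟨fun {r b} h => ?_⟩
    rcases eq_or_ne r 0 with h0 | h0
    · exact Or.inl h0
    · refine Or.inr (Subtype.ext ?_)
      have hv : r • (b : L) = 0 := by exact_mod_cast congrArg Subtype.val h
      rw [Algebra.smul_def] at hv
      rcases mul_eq_zero.mp hv with hc | hc
      · exact absurd (hRL (by rw [hc, map_zero])) h0
      · exact hc
  haveI : Module.Free R B := Module.free_of_finite_type_torsion_free'
  haveI : IsIntegrallyClosed B := aux_isIntegrallyClosed R B
  have hsurj' : ∀ z : L, ∃ (a : A) (r : R), r ≠ 0 ∧ z * algebraMap R L r = f a := by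
    intro z
    obtain ⟨t, rfl⟩ := hφ z
    induction t with
    | zero => exact ⟨0, 1, one_ne_zero, by simp⟩
    | tmul c a =>
        obtain ⟨⟨x, r⟩, hxr⟩ := IsLocalization.surj (nonZeroDivisors R) c
        have hxr' : c * algebraMap R K (r : R) = algebraMap R K x := hxr
        refine ⟨x • a, r, nonZeroDivisors.coe_ne_zero r, ?_⟩
        have h1 : φ (((r : R) • c) ⊗ₜ[R] a) = φ (c ⊗ₜ[R] a) * algebraMap R L r :=
          calc φ (((r : R) • c) ⊗ₜ[R] a) = φ ((r : R) • (c ⊗ₜ[R] a)) := by rw [smul_tmul']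
            _ = (r : R) • φ (c ⊗ₜ[R] a) := (φ.toLinearMap.restrictScalars R).map_smul _ _
            _ = φ (c ⊗ₜ[R] a) * algebraMap R L r := by rw [Algebra.smul_def, mul_comm]
        have hxc : ((r : R) • c) = algebraMap R K x := by
          rw [Algebra.smul_def, mul_comm, hxr']
        calc φ (c ⊗ₜ[R] a) * algebraMap R L ↑r
            = φ (((r : R) • c) ⊗ₜ[R] a) := h1.symm
          _ = φ ((algebraMap R K x) ⊗ₜ[R] a) := by rw [hxc]
          _ = φ (x • ((1 : K) ⊗ₜ[R] a)) := by
              rw [smul_tmul', Algebra.algebraMap_eq_smul_one]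
          _ = x • φ ((1 : K) ⊗ₜ[R] a) := (φ.toLinearMap.restrictScalars R).map_smul _ _
          _ = x • f a := rfl
          _ = f (x • a) := (map_smul f x a).symm
    | add t1 t2 ih1 ih2 =>
        obtain ⟨a1, r1, h1, e1⟩ := ih1
        obtain ⟨a2, r2, h2, e2⟩ := ih2
        refine ⟨r2 • a1 + r1 • a2, r1 * r2, mul_ne_zero h1 h2, ?_⟩
        rw [map_add, map_add, map_mul, add_mul]
        rw [map_smul, map_smul]
        rw [Algebra.smul_def (A := L), Algebra.smul_def (A := L)]
        rw [← e1, ← e2]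
        ring
  haveI : IsFractionRing B L := by
    refine ⟨fun y => ?_, fun z => ?_, fun {x y} h => ⟨1, ?_⟩⟩
    · have hy : ((y : B) : L) ≠ 0 := fun h0 =>
        nonZeroDivisors.ne_zero y.2 (Subtype.ext h0)
      exact isUnit_iff_ne_zero.mpr hy
    · obtain ⟨a, r, hr, ha⟩ := hsurj' z
      have hmem : algebraMap R L r ∈ B := ⟨algebraMap R A r, f.commutes r⟩
      have hne : (⟨algebraMap R L r, hmem⟩ : B) ≠ 0 := fun h0 => by
        apply hr
        apply hRL
        rw [map_zero]
        exact congrArg Subtype.val h0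
      exact ⟨⟨⟨f a, a, rfl⟩, ⟨⟨algebraMap R L r, hmem⟩, mem_nonZeroDivisors_of_ne_zero hne⟩⟩, ha⟩
    · have hxy : x = y := Subtype.ext h
      rw [hxy]
  have hBeq : integralClosure R L = B := by
    apply le_antisymm
    · intro x hx
      have hxB : IsIntegral B x := IsIntegral.tower_top (A := B) hx
      obtain ⟨y, hy⟩ := IsIntegrallyClosed.isIntegral_iff.mp hxB
      exact hy ▸ y.2
    · intro x hx
      obtain ⟨a, ha⟩ := hx
      exact ha ▸ IsIntegral.map f ((Algebra.IsIntegral.of_finite R A).isIntegral a)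
  refine ⟨hfin, hsep, ?_, ?_, ?_⟩ <;> rw [hBeq] <;> infer_instance
end

section
/- Let R → R' be a faithfully flat ring homomorphism and let M be a finitely presented R-module. If M ⊗_R R' is a projective R'-module, then M is a projective R-module. -/
open TensorProduct

/-- Injectivity descends along a faithfully flat ring map. -/
lemma injective_of_faithfullyFlat_lTensor
    (R R' : Type) [CommRing R] [CommRing R'] [Algebra R R'] [Module.FaithfullyFlat R R']
    {N P : Type} [AddCommGroup N] [Module R N] [AddCommGroup P] [Module R P]
    (f : N →ₗ[R] P) (h : Function.Injective (f.lTensor R')) : Function.Injective f := by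
  rw [← LinearMap.ker_eq_bot] at h ⊢
  have := Module.FaithfullyFlat.lTensor_reflects_exact R R' (0 : N →ₗ[R] N) f ?_
  · rw [LinearMap.exact_iff] at this
    rw [this, LinearMap.range_zero]
  · rw [LinearMap.exact_iff, LinearMap.lTensor_zero, LinearMap.range_zero, h]

/-- Descent of projectivity along a faithfully flat ring map, for finitely presented modules. -/
theorem projective_of_faithfullyFlat_baseChange
    (R R' : Type) [CommRing R] [CommRing R'] [Algebra R R'] [Module.FaithfullyFlat R R']
    (M : Type) [AddCommGroup M] [Module R M] [Module.FinitePresentation R M]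
    (h : Module.Projective R' (R' ⊗[R] M)) :
    Module.Projective R M := by
  have hflat' : Module.Flat R' (R' ⊗[R] M) := Module.Flat.of_projective
  have hflatR : Module.Flat R (R' ⊗[R] M) := Module.Flat.trans R R' (R' ⊗[R] M)
  have hM : Module.Flat R M := by
    rw [Module.Flat.iff_rTensor_injective']
    intro I
    apply injective_of_faithfullyFlat_lTensor R R'
    have hcomm : (TensorProduct.leftComm R R' R M).toLinearMap ∘ₗ
        (LinearMap.rTensor M I.subtype).lTensor R'
        = (LinearMap.rTensor (R' ⊗[R] M) I.subtype) ∘ₗ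
          (TensorProduct.leftComm R R' (I : Type) M).toLinearMap := by
      ext r' i m
      simp
    have h1 : Function.Injective (LinearMap.rTensor (R' ⊗[R] M) I.subtype) :=
      Module.Flat.rTensor_preserves_injective_linearMap I.subtype (Submodule.injective_subtype I)
    intro x y hxy
    apply (TensorProduct.leftComm R R' (I : Type) M).injective
    apply h1
    have hx := congr($(hcomm) x)
    have hy := congr($(hcomm) y)
    simp only [LinearMap.comp_apply, LinearEquiv.coe_coe] at hx hy
    rw [← hx, ← hy, hxy]
  rw [← Module.freeLocus_eq_univ_iff]
  exact Module.freeLocus_eq_univ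
end
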